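/- The map α ↦ g_α sending α ∈ (0,1) to the α-expectile of a fixed non-degenerate square-integrable random variable Y is strictly monotonically increasing. -/

import Mathlib

open MeasureTheory

/-- First-order condition characterizing the `α`-expectile `g` of a random variable `Y`:
`α·E[(Y - g)₊] = (1-α)·E[(g - Y)₊]`. -/
def IsExpectileFOC {Ω : Type*} [MeasurableSpace Ω] (μ : Measure Ω) (Y : Ω → ℝ)
    (α g : ℝ) : Prop :=
  α * ∫ ω, max (Y ω - g) 0 ∂μ = (1 - α) * ∫ ω, max (g - Y ω) 0 ∂μ

/-- For a fixed non-degenerate square-integrable random variable `Y`, the map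
`α ↦ g_α` sending `α ∈ (0,1)` to the `α`-expectile of `Y` is strictly increasing. -/
theorem stmt3 {Ω : Type*} [MeasurableSpace Ω] (μ : Measure Ω) [IsProbabilityMeasure μ]
    (Y : Ω → ℝ) (hY : MemLp Y 2 μ)
    (hnc : ¬ ∃ c : ℝ, ∀ᵐ ω ∂μ, Y ω = c)
    (α₁ α₂ : ℝ) (hα₁ : α₁ ∈ Set.Ioo (0 : ℝ) 1) (hα₂ : α₂ ∈ Set.Ioo (0 : ℝ) 1)
    (hlt : α₁ < α₂) (g₁ g₂ : ℝ)
    (h₁ : IsExpectileFOC μ Y α₁ g₁) (h₂ : IsExpectileFOC μ Y α₂ g₂) :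
    g₁ < g₂ := by
  by_contra hcon
  push_neg at hcon
  have hYi : Integrable Y μ := hY.integrable one_le_two
  have hiP : ∀ g : ℝ, Integrable (fun ω => max (Y ω - g) 0) μ := fun g =>
    (hYi.sub (integrable_const g)).sup (integrable_const 0)
  have hiN : ∀ g : ℝ, Integrable (fun ω => max (g - Y ω) 0) μ := fun g =>
    ((integrable_const g).sub hYi).sup (integrable_const 0)
  set P : ℝ → ℝ := fun g => ∫ ω, max (Y ω - g) 0 ∂μ with hPdef
  set N : ℝ → ℝ := fun g => ∫ ω, max (g - Y ω) 0 ∂μ with hNdef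
  have hPnn : ∀ g, 0 ≤ P g := fun g =>
    integral_nonneg (fun ω => le_max_right _ _)
  have hNnn : ∀ g, 0 ≤ N g := fun g =>
    integral_nonneg (fun ω => le_max_right _ _)
  -- at an FOC point with α ∈ (0,1), P g + N g > 0
  have key : ∀ α g, α ∈ Set.Ioo (0:ℝ) 1 → IsExpectileFOC μ Y α g → 0 < P g + N g := by
    intro α g hα hfoc
    rcases lt_or_eq_of_le (add_nonneg (hPnn g) (hNnn g)) with h | h
    · exact h
    · exfalso
      have hP0 : P g = 0 := le_antisymm (by linarith [hNnn g]) (hPnn g)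
      have hN0 : N g = 0 := by linarith [hPnn g, hNnn g]
      have h1 : ∀ᵐ ω ∂μ, max (Y ω - g) 0 = 0 := by
        have := (integral_eq_zero_iff_of_nonneg
          (fun ω => le_max_right _ _) (hiP g)).mp hP0
        filter_upwards [this] with ω hω using hω
      have h2 : ∀ᵐ ω ∂μ, max (g - Y ω) 0 = 0 := by
        have := (integral_eq_zero_iff_of_nonneg
          (fun ω => le_max_right _ _) (hiN g)).mp hN0
        filter_upwards [this] with ω hω using hω
      apply hnc
      refine ⟨g, ?_⟩
      filter_upwards [h1, h2] with ω hω1 hω2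
      have hle1 : Y ω - g ≤ 0 := by
        by_contra hgt; push_neg at hgt
        rw [max_eq_left hgt.le] at hω1; linarith
      have hle2 : g - Y ω ≤ 0 := by
        by_contra hgt; push_neg at hgt
        rw [max_eq_left hgt.le] at hω2; linarith
      linarith
  have hS1 := key α₁ g₁ hα₁ h₁
  have hS2 := key α₂ g₂ hα₂ h₂
  -- FOC gives α * (P + N) = N
  have e1 : α₁ * (P g₁ + N g₁) = N g₁ := by
    have := h₁; unfold IsExpectileFOC at this; ring_nf; ring_nf at this; linarith
  have e2 : α₂ * (P g₂ + N g₂) = N g₂ := by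
    have := h₂; unfold IsExpectileFOC at this; ring_nf; ring_nf at this; linarith
  -- monotonicity: g₂ ≤ g₁ ⇒ N g₂ ≤ N g₁ and P g₁ ≤ P g₂
  have hN21 : N g₂ ≤ N g₁ :=
    integral_mono (hiN g₂) (hiN g₁) (fun ω => max_le_max (by linarith) le_rfl)
  have hP12 : P g₁ ≤ P g₂ :=
    integral_mono (hiP g₁) (hiP g₂) (fun ω => max_le_max (by linarith) le_rfl)
  have hcross : N g₂ * P g₁ ≤ N g₁ * P g₂ :=
    mul_le_mul hN21 hP12 (hPnn g₁) (hNnn g₁)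
  have : α₂ * ((P g₂ + N g₂) * (P g₁ + N g₁)) ≤ α₁ * ((P g₁ + N g₁) * (P g₂ + N g₂)) := by
    nlinarith [hNnn g₁, hNnn g₂, hPnn g₁, hPnn g₂]
  have hpos : 0 < (P g₂ + N g₂) * (P g₁ + N g₁) := mul_pos hS2 hS1
  nlinarith
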